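/- Let A be a real symmetric positive definite 2×2 matrix and k > 0, and let v be the minimal solution of the boundary value problem for E_{A,k}. Then v is recurrent in E_{A,k}. -/

import Mathlib

open Matrix

/-!
STATEMENT 4: Let `A` be a real symmetric positive definite 2×2 matrix and `k > 0`, and let
`v` be the minimal solution of the boundary value problem for `E_{A,k}`
(i.e. `Δv ≤ 3` on `E_{A,k}`, `v ≥ 0` off `E_{A,k}`, and `v` is pointwise below every
other such function).  Then `v` is recurrent in `E_{A,k}`.
-/

abbrev Z2 := ℤ × ℤ

/-- Nearest-neighbor adjacency in `ℤ²`. -/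
def adj (x y : Z2) : Prop := (x.1 - y.1).natAbs + (x.2 - y.2).natAbs = 1

/-- The discrete Laplacian on `ℤ²`: `Δw(x) = -4w(x) + Σ_{y∼x} w(y)`. -/
def lap (w : Z2 → ℤ) (x : Z2) : ℤ :=
  -(4 * w x) + (w (x.1 + 1, x.2) + w (x.1 - 1, x.2) + w (x.1, x.2 + 1) + w (x.1, x.2 - 1))

/-- The embedding of the lattice `ℤ²` into the Euclidean plane. -/
noncomputable def pt (x : Z2) : EuclideanSpace ℝ (Fin 2) :=
  (WithLp.equiv 2 (Fin 2 → ℝ)).symm ![(x.1 : ℝ), (x.2 : ℝ)]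

/-- The quadratic form `q_A(x) = (1/2)xᵀAx`. -/
noncomputable def qA (A : Matrix (Fin 2) (Fin 2) ℝ) (x : EuclideanSpace ℝ (Fin 2)) : ℝ :=
  (1 / 2) * ((WithLp.equiv 2 (Fin 2 → ℝ) x) ⬝ᵥ A.mulVec (WithLp.equiv 2 (Fin 2 → ℝ) x))

/-- The lattice ellipse `E_{A,k} = {x ∈ ℤ² : q_A(x) < k}`. -/
noncomputable def Elat (A : Matrix (Fin 2) (Fin 2) ℝ) (k : ℝ) : Set Z2 :=
  {x | qA A (pt x) < k}

/-- The outer boundary `∂X` of a subset `X ⊆ ℤ²`. -/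
def outerBd (X : Set Z2) : Set Z2 := {y | y ∉ X ∧ ∃ x ∈ X, adj x y}

/-- `v` is recurrent in `X`: `Δv ≤ 3` on `X`, and `sup_Y (v−w) ≤ sup_{(X∖Y)∪∂X} (v−w)`
whenever `Δw ≤ 3` on a finite `Y ⊆ X` (the sup inequality expressed pointwise). -/
def RecurrentIn (v : Z2 → ℤ) (X : Set Z2) : Prop :=
  (∀ x ∈ X, lap v x ≤ 3) ∧
  ∀ w : Z2 → ℤ, ∀ Y : Set Z2, Y ⊆ X → Y.Finite →
    (∀ x ∈ Y, lap w x ≤ 3) →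
    ∀ y ∈ Y, ∃ z ∈ (X \ Y) ∪ outerBd X, v y - w y ≤ v z - w z

/-- `v` solves the boundary value problem for `E_{A,k}`. -/
noncomputable def SolvesBVP (A : Matrix (Fin 2) (Fin 2) ℝ) (k : ℝ) (v : Z2 → ℤ) : Prop :=
  (∀ x ∈ Elat A k, lap v x ≤ 3) ∧ ∀ x, x ∉ Elat A k → 0 ≤ v x

/-- `v` is the pointwise-minimal solution of the boundary value problem for `E_{A,k}`. -/
noncomputable def IsMinimalSolution (A : Matrix (Fin 2) (Fin 2) ℝ) (k : ℝ) (v : Z2 → ℤ) :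
    Prop :=
  SolvesBVP A k v ∧ ∀ w, SolvesBVP A k w → ∀ x, v x ≤ w x

lemma mem_elat_ineq {A : Matrix (Fin 2) (Fin 2) ℝ} {k : ℝ} {x : Z2} (h : x ∈ Elat A k) :
    A 0 0 * (x.1:ℝ)^2 + (A 0 1 + A 1 0) * x.1 * x.2 + A 1 1 * (x.2:ℝ)^2 < 2*k := by
  have h' : qA A (pt x) < k := h
  rw [show qA A (pt x) = (1/2) * (A 0 0 * (x.1:ℝ)^2 + (A 0 1 + A 1 0) * x.1 * x.2 + A 1 1 * (x.2:ℝ)^2) from by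
    simp [qA, pt, dotProduct, Matrix.mulVec, Fin.sum_univ_two]; ring] at h'
  linarith

lemma elat_finite (A : Matrix (Fin 2) (Fin 2) ℝ) (hA : A.IsSymm) (hApd : A.PosDef) (k : ℝ) :
    (Elat A k).Finite := by
  set a := A 0 0 with ha'
  set b := A 0 1 with hb'
  set c := A 1 1 with hc'
  have hb : A 1 0 = b := by
    have := congrFun (congrFun hA 0) 1; simpa [Matrix.transpose_apply] using this
  have ha : 0 < a := by
    have h := hApd.dotProduct_mulVec_pos (x := Pi.single 0 1) (by
      intro h; have := congrFun h 0; simp [Pi.single_eq_same] at this)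
    simpa [dotProduct, Matrix.mulVec, Fin.sum_univ_two, Pi.single_apply] using h
  have hc : 0 < c := by
    have h := hApd.dotProduct_mulVec_pos (x := Pi.single 1 1) (by
      intro h; have := congrFun h 1; simp [Pi.single_eq_same] at this)
    simpa [dotProduct, Matrix.mulVec, Fin.sum_univ_two, Pi.single_apply] using h
  have hdet : 0 < a * c - b * b := by
    have := hApd.det_pos
    rw [Matrix.det_fin_two, hb] at this
    linarith
  set N1 : ℤ := ⌈2*c*k/(a*c-b*b)⌉ + 1 with hN1
  set N2 : ℤ := ⌈2*a*k/(a*c-b*b)⌉ + 1 with hN2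
  apply Set.Finite.subset ((Set.finite_Icc (-N1) N1).prod (Set.finite_Icc (-N2) N2))
  intro x hx
  have h := mem_elat_ineq hx
  rw [hb] at h
  set X := (x.1 : ℝ) with hX
  set Y := (x.2 : ℝ) with hY
  have h1 : (a*c - b*b) * X^2 < 2*c*k := by nlinarith [sq_nonneg (b*X + c*Y)]
  have h2 : (a*c - b*b) * Y^2 < 2*a*k := by nlinarith [sq_nonneg (a*X + b*Y)]
  have h1' : X^2 ≤ (⌈2*c*k/(a*c-b*b)⌉ : ℝ) :=
    le_trans ((lt_div_iff₀' hdet).2 h1).le (Int.le_ceil _)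
  have h2' : Y^2 ≤ (⌈2*a*k/(a*c-b*b)⌉ : ℝ) :=
    le_trans ((lt_div_iff₀' hdet).2 h2).le (Int.le_ceil _)
  have hi1 : x.1^2 ≤ ⌈2*c*k/(a*c-b*b)⌉ := by
    have : ((x.1^2 : ℤ):ℝ) ≤ ((⌈2*c*k/(a*c-b*b)⌉ : ℤ) : ℝ) := by push_cast; exact h1'
    exact_mod_cast this
  have hi2 : x.2^2 ≤ ⌈2*a*k/(a*c-b*b)⌉ := by
    have : ((x.2^2 : ℤ):ℝ) ≤ ((⌈2*a*k/(a*c-b*b)⌉ : ℤ) : ℝ) := by push_cast; exact h2'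
    exact_mod_cast this
  have habs1 : |x.1| ≤ N1 := by
    have : |x.1| ≤ x.1^2 + 1 := by nlinarith [sq_abs x.1, abs_nonneg x.1, sq_nonneg (|x.1| - 1)]
    omega
  have habs2 : |x.2| ≤ N2 := by
    have : |x.2| ≤ x.2^2 + 1 := by nlinarith [sq_abs x.2, abs_nonneg x.2, sq_nonneg (|x.2| - 1)]
    omega
  exact ⟨Set.mem_Icc.2 (abs_le.1 habs1), Set.mem_Icc.2 (abs_le.1 habs2)⟩

lemma adj_cases {x y : Z2} (h : adj x y) :
    y = (x.1 + 1, x.2) ∨ y = (x.1 - 1, x.2) ∨ y = (x.1, x.2 + 1) ∨ y = (x.1, x.2 - 1) := by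
  unfold adj at h
  rcases x with ⟨x1, x2⟩; rcases y with ⟨y1, y2⟩
  simp only [Prod.mk.injEq]
  omega

lemma outerBd_finite {X : Set Z2} (h : X.Finite) : (outerBd X).Finite := by
  apply Set.Finite.subset (((h.image (fun p : Z2 => (p.1+1,p.2))).union
    (h.image (fun p : Z2 => (p.1-1,p.2)))).union
    ((h.image (fun p : Z2 => (p.1,p.2+1))).union (h.image (fun p : Z2 => (p.1,p.2-1)))))
  rintro y ⟨-, x, hx, hadj⟩
  rcases adj_cases hadj with h' | h' | h' | h' <;> subst h'
  · exact Or.inl (Or.inl ⟨x, hx, rfl⟩)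
  · exact Or.inl (Or.inr ⟨x, hx, rfl⟩)
  · exact Or.inr (Or.inl ⟨x, hx, rfl⟩)
  · exact Or.inr (Or.inr ⟨x, hx, rfl⟩)

lemma outerBd_nonempty {X : Set Z2} (hfin : X.Finite) {x0 : Z2} (hx0 : x0 ∈ X) :
    (outerBd X).Nonempty := by
  set T : Set ℕ := {n : ℕ | ((x0.1 + n : ℤ), x0.2) ∈ X} with hT
  have hTfin : T.Finite := by
    apply Set.Finite.preimage _ hfin
    intro m _ n _ h
    simp only [Prod.mk.injEq] at h
    omega
  have hTne : T.Nonempty := ⟨0, by simp only [hT, Set.mem_setOf_eq]; simpa using hx0⟩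
  set M := sSup T with hM
  have hMT : M ∈ T := Nat.sSup_mem hTne hTfin.bddAbove
  have hM1 : (M + 1 : ℕ) ∉ T := fun h => by
    have := le_csSup hTfin.bddAbove h; omega
  refine ⟨((x0.1 + M + 1 : ℤ), x0.2), ?_, ((x0.1 + M : ℤ), x0.2), hMT, ?_⟩
  · intro h
    apply hM1
    simp only [hT, Set.mem_setOf_eq]
    have e : x0.1 + ((M+1:ℕ):ℤ) = x0.1 + M + 1 := by push_cast; ring
    rw [e]; exact h
  · unfold adj
    simp only []
    omega

lemma adj_nbrs (x : Z2) : adj x (x.1 + 1, x.2) ∧ adj x (x.1 - 1, x.2) ∧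
    adj x (x.1, x.2 + 1) ∧ adj x (x.1, x.2 - 1) := by
  unfold adj; refine ⟨?_, ?_, ?_, ?_⟩ <;> simp


theorem minimal_solution_recurrent (A : Matrix (Fin 2) (Fin 2) ℝ)
    (hA : A.IsSymm) (hApd : A.PosDef) (k : ℝ) (hk : 0 < k)
    (v : Z2 → ℤ) (hv : IsMinimalSolution A k v) :
    RecurrentIn v (Elat A k) := by
  classical
  obtain ⟨⟨hlapv, hv0⟩, hmin⟩ := hv
  refine ⟨hlapv, ?_⟩
  intro w Y hYX hYfin hw y hy
  set E := Elat A k with hE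
  have hEfin : E.Finite := elat_finite A hA hApd k
  set S : Set Z2 := (E \ Y) ∪ outerBd E with hS
  have hSfin : S.Finite := (hEfin.subset Set.diff_subset).union (outerBd_finite hEfin)
  have hSne : S.Nonempty := (outerBd_nonempty hEfin (hYX hy)).mono Set.subset_union_right
  set F : Finset Z2 := hSfin.toFinset with hF
  have hFne : F.Nonempty := by rwa [hF, Set.Finite.toFinset_nonempty]
  set c : ℤ := F.sup' hFne (fun z => v z - w z) with hc
  obtain ⟨z, hzF, hzc⟩ := Finset.exists_mem_eq_sup' hFne (fun z => v z - w z)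
  have hzS : z ∈ S := (Set.Finite.mem_toFinset hSfin).1 hzF
  have hcS : ∀ s ∈ S, v s - w s ≤ c :=
    fun s hs => Finset.le_sup' (fun z => v z - w z) ((Set.Finite.mem_toFinset hSfin).2 hs)
  set u : Z2 → ℤ := fun x => if x ∈ Y then min (v x) (w x + c) else v x with hu
  have hule : ∀ x, u x ≤ v x := by
    intro x; by_cases h : x ∈ Y <;> simp [hu, h]
  have hkey : ∀ p ∈ Y, ∀ q, adj p q → u q ≤ w q + c := by
    intro p hp q hadj
    by_cases hq : q ∈ Y
    · simp [hu, hq]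
    · have huq : u q = v q := by simp [hu, hq]
      rw [huq]
      have : q ∈ S := by
        by_cases hqE : q ∈ E
        · exact Or.inl ⟨hqE, hq⟩
        · exact Or.inr ⟨hqE, p, hYX hp, hadj⟩
      have := hcS q this; omega
  have huBVP : SolvesBVP A k u := by
    constructor
    · intro x hxE
      obtain ⟨ha1, ha2, ha3, ha4⟩ := adj_nbrs x
      by_cases hxY : x ∈ Y
      · by_cases hm : v x ≤ w x + c
        · have h1 : u x = v x := by simp [hu, hxY, min_eq_left hm]
          have hL := hlapv x hxE
          simp only [lap] at hL ⊢
          rw [h1]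
          have := hule (x.1 + 1, x.2); have := hule (x.1 - 1, x.2)
          have := hule (x.1, x.2 + 1); have := hule (x.1, x.2 - 1)
          omega
        · have h1 : u x = w x + c := by
            simp [hu, hxY, min_eq_right (le_of_not_ge hm)]
          have hL := hw x hxY
          simp only [lap] at hL ⊢
          rw [h1]
          have := hkey x hxY _ ha1; have := hkey x hxY _ ha2
          have := hkey x hxY _ ha3; have := hkey x hxY _ ha4
          omega
      · have h1 : u x = v x := by simp [hu, hxY]
        have hL := hlapv x hxE
        simp only [lap] at hL ⊢
        rw [h1]
        have := hule (x.1 + 1, x.2); have := hule (x.1 - 1, x.2)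
        have := hule (x.1, x.2 + 1); have := hule (x.1, x.2 - 1)
        omega
    · intro x hxE
      have hxY : x ∉ Y := fun h => hxE (hYX h)
      have h1 : u x = v x := by simp [hu, hxY]
      rw [h1]; exact hv0 x hxE
  have hvy := hmin u huBVP y
  have huy : u y = min (v y) (w y + c) := by simp [hu, hy]
  rw [huy] at hvy
  have : v y - w y ≤ c := by omega
  exact ⟨z, hzS, by omega⟩
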